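/- For q ≥ 1 and t ≥ 0, the confluent hypergeometric function satisfies 1 + t/q − (1/(6q))(1 − 1/q)t² ≤ M(−1/q, 1/2, −t/2) ≤ 1 + t/q, where M(c, d, x) = Σ_{n≥0} (c)_n x^n/((d)_n n!). -/

import Mathlib

open Real

open Finset Polynomial

private lemma poch_succ_left_eval (x : ℝ) (n : ℕ) :
    (ascPochhammer ℝ (n+1)).eval x = x * (ascPochhammer ℝ n).eval (x + 1) := by
  rw [ascPochhammer_succ_left]
  simp [eval_comp]

private lemma chu_vandermonde (n : ℕ) : ∀ b c : ℝ, 0 < b →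
    ∑ k ∈ range (n+1), (-1:ℝ)^k * (n.choose k : ℝ) *
        (ascPochhammer ℝ k).eval c / (ascPochhammer ℝ k).eval b
      = (ascPochhammer ℝ n).eval (b - c) / (ascPochhammer ℝ n).eval b := by
  induction n with
  | zero => intro b c hb; simp
  | succ n ih =>
    intro b c hb
    have hb0 : b ≠ 0 := ne_of_gt hb
    have hb' : (0:ℝ) < b + 1 := by linarith
    have hpbn : (0:ℝ) < (ascPochhammer ℝ n).eval b := ascPochhammer_pos n b hb
    have hpb1 : (0:ℝ) < (ascPochhammer ℝ n).eval (b+1) := ascPochhammer_pos n (b+1) hb'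
    set f : ℕ → ℝ := fun k => (-1:ℝ)^k * (((n+1).choose k : ℕ) : ℝ) *
        (ascPochhammer ℝ k).eval c / (ascPochhammer ℝ k).eval b with hf
    set g : ℕ → ℝ := fun k => (-1:ℝ)^k * ((n.choose k : ℕ) : ℝ) *
        (ascPochhammer ℝ k).eval c / (ascPochhammer ℝ k).eval b with hg
    have key : ∀ k ∈ range (n+1), f (k+1) =
        g (k+1) + (-(c/b)) * ((-1:ℝ)^k * (n.choose k : ℝ) *
          (ascPochhammer ℝ k).eval (c+1) / (ascPochhammer ℝ k).eval (b+1)) := by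
      intro k _
      have h1 : (ascPochhammer ℝ (k+1)).eval c = c * (ascPochhammer ℝ k).eval (c+1) :=
        poch_succ_left_eval c k
      have h2 : (ascPochhammer ℝ (k+1)).eval b = b * (ascPochhammer ℝ k).eval (b+1) :=
        poch_succ_left_eval b k
      have hpk : (0:ℝ) < (ascPochhammer ℝ k).eval (b+1) := ascPochhammer_pos k (b+1) hb'
      simp only [hf, hg, Nat.choose_succ_succ]
      push_cast
      rw [h1, h2]
      field_simp
      ring
    have split : ∑ k ∈ range (n+2), f k
        = (∑ k ∈ range (n+1), f (k+1)) + f 0 := Finset.sum_range_succ' f (n+1)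
    have hsum2 : ∑ k ∈ range (n+1),
        ((-1:ℝ)^k * (n.choose k : ℝ) *
          (ascPochhammer ℝ k).eval (c+1) / (ascPochhammer ℝ k).eval (b+1))
        = (ascPochhammer ℝ n).eval (b - c) / (ascPochhammer ℝ n).eval (b+1) := by
      have := ih (b+1) (c+1) hb'
      have harg : b + 1 - (c + 1) = b - c := by ring
      rwa [harg] at this
    have hg1 : (∑ k ∈ range (n+1), g (k+1)) + f 0 = ∑ k ∈ range (n+1), g k := by
      have e1 : ∑ k ∈ range (n+2), g k = (∑ k ∈ range (n+1), g (k+1)) + g 0 :=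
        Finset.sum_range_succ' g (n+1)
      have e2 : ∑ k ∈ range (n+2), g k = (∑ k ∈ range (n+1), g k) + g (n+1) :=
        Finset.sum_range_succ g (n+1)
      have hgn : g (n+1) = 0 := by simp [hg, Nat.choose_succ_self]
      have hf0 : f 0 = g 0 := by simp [hf, hg]
      rw [hf0]
      linarith [e1, e2, hgn]
    calc ∑ k ∈ range (n+2), f k
        = (∑ k ∈ range (n+1), f (k+1)) + f 0 := split
      _ = (∑ k ∈ range (n+1), (g (k+1) + (-(c/b)) * ((-1:ℝ)^k * (n.choose k : ℝ) *
            (ascPochhammer ℝ k).eval (c+1) / (ascPochhammer ℝ k).eval (b+1)))) + f 0 := by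
          rw [Finset.sum_congr rfl key]
      _ = ((∑ k ∈ range (n+1), g (k+1)) + f 0) + (-(c/b)) * ∑ k ∈ range (n+1),
            ((-1:ℝ)^k * (n.choose k : ℝ) *
            (ascPochhammer ℝ k).eval (c+1) / (ascPochhammer ℝ k).eval (b+1)) := by
          rw [Finset.sum_add_distrib, ← Finset.mul_sum]; ring
      _ = (ascPochhammer ℝ n).eval (b - c) / (ascPochhammer ℝ n).eval b
            + (-(c/b)) * ((ascPochhammer ℝ n).eval (b - c) / (ascPochhammer ℝ n).eval (b+1)) := by
          rw [hg1, ih b c hb, hsum2]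
      _ = (ascPochhammer ℝ (n+1)).eval (b - c) / (ascPochhammer ℝ (n+1)).eval b := by
          have hrel : b * (ascPochhammer ℝ n).eval (b+1)
              = (ascPochhammer ℝ n).eval b * (b + n) := by
            rw [← poch_succ_left_eval, ascPochhammer_succ_eval]
          rw [ascPochhammer_succ_eval, ascPochhammer_succ_eval]
          have hp' : (ascPochhammer ℝ n).eval (b+1)
              = (ascPochhammer ℝ n).eval b * (b + n) / b := by
            field_simp
            linarith [hrel]
          rw [hp']
          have hbn : b + (n:ℝ) ≠ 0 := by positivity
          field_simp
          ring

private lemma shift1 (s : ℝ) (n : ℕ) :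
    (((n:ℕ)+1 : ℕ) : ℝ) * (s^(n+1) / (n+1).factorial) = s * (s^n / n.factorial) := by
  have h : ((n+1).factorial : ℝ) = ((n:ℝ)+1) * n.factorial := by
    rw [Nat.factorial_succ]; push_cast; ring
  rw [h, pow_succ]
  have h1 : ((n.factorial : ℝ)) ≠ 0 := by positivity
  have h2 : ((n:ℝ)+1) ≠ 0 := by positivity
  push_cast
  field_simp

private lemma summable_ne (s : ℝ) : Summable (fun n : ℕ => (n:ℝ) * (s^n / n.factorial)) := by
  apply (summable_nat_add_iff 1).1
  have : (fun n : ℕ => ((n+1:ℕ):ℝ) * (s^(n+1) / (n+1).factorial))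
      = fun n : ℕ => s * (s^n / n.factorial) := by
    funext n; exact_mod_cast shift1 s n
  exact this ▸ ((Real.summable_pow_div_factorial s).mul_left s)

private lemma tsum_ne (s : ℝ) :
    ∑' n : ℕ, (n:ℝ) * (s^n / n.factorial) = s * ∑' n : ℕ, s^n / n.factorial := by
  rw [Summable.tsum_eq_zero_add (summable_ne s)]
  simp only [Nat.cast_zero, zero_mul, zero_add]
  have : (fun n : ℕ => ((n+1:ℕ):ℝ) * (s^(n+1) / (n+1).factorial))
      = fun n : ℕ => s * (s^n / n.factorial) := by
    funext n; exact_mod_cast shift1 s n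
  rw [this]
  exact tsum_mul_left

private lemma shift2 (s : ℝ) (n : ℕ) :
    (((n:ℕ)+2 : ℕ) : ℝ) * ((((n:ℕ)+2 : ℕ) : ℝ) - 1) * (s^(n+2) / (n+2).factorial)
      = s^2 * (s^n / n.factorial) := by
  have h : ((n+2).factorial : ℝ) = ((n:ℝ)+2) * (((n:ℝ)+1) * n.factorial) := by
    rw [Nat.factorial_succ, Nat.factorial_succ]; push_cast; ring
  rw [h]
  have h1 : ((n.factorial : ℝ)) ≠ 0 := by positivity
  push_cast
  have h2 : ((n:ℝ)+1) ≠ 0 := by positivity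
  have h3 : ((n:ℝ)+2) ≠ 0 := by positivity
  field_simp
  ring

private lemma summable_nne (s : ℝ) :
    Summable (fun n : ℕ => (n:ℝ) * ((n:ℝ) - 1) * (s^n / n.factorial)) := by
  apply (summable_nat_add_iff 2).1
  have : (fun n : ℕ => ((n+2:ℕ):ℝ) * (((n+2:ℕ):ℝ) - 1) * (s^(n+2) / (n+2).factorial))
      = fun n : ℕ => s^2 * (s^n / n.factorial) := by
    funext n; exact_mod_cast shift2 s n
  exact this ▸ ((Real.summable_pow_div_factorial s).mul_left (s^2))

private lemma tsum_nne (s : ℝ) :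
    ∑' n : ℕ, (n:ℝ) * ((n:ℝ) - 1) * (s^n / n.factorial)
      = s^2 * ∑' n : ℕ, s^n / n.factorial := by
  rw [Summable.tsum_eq_zero_add (summable_nne s)]
  simp only [Nat.cast_zero, zero_mul, zero_add]
  rw [Summable.tsum_eq_zero_add ((summable_nat_add_iff 1).2 (summable_nne s))]
  have hfun : (fun n : ℕ => ((n+1+1:ℕ):ℝ) * (((n+1+1:ℕ):ℝ) - 1) * (s^(n+1+1) / ((n+1+1:ℕ).factorial:ℝ)))
      = fun n : ℕ => s^2 * (s^n / n.factorial) := by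
    funext n
    have h2 : n+1+1 = n+2 := rfl
    rw [h2]
    exact_mod_cast shift2 s n
  push_cast at hfun ⊢
  rw [hfun]
  norm_num
  exact tsum_mul_left

private lemma cauchy_term (u s : ℝ) (n : ℕ) :
    ∑ k ∈ range (n+1),
      ((ascPochhammer ℝ k).eval (-u) * (-s)^k / ((ascPochhammer ℝ k).eval (1/2) * k.factorial))
        * (s^(n-k) / (n-k).factorial)
    = ((ascPochhammer ℝ n).eval (1/2 + u) / (ascPochhammer ℝ n).eval (1/2))
        * (s^n / n.factorial) := by
  have h := chu_vandermonde n (1/2) (-u) (by norm_num)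
  have harg : (1:ℝ)/2 - (-u) = 1/2 + u := by ring
  rw [harg] at h
  rw [← h, Finset.sum_mul]
  apply Finset.sum_congr rfl
  intro k hk
  have hk' : k ≤ n := Nat.lt_succ_iff.mp (Finset.mem_range.mp hk)
  have hch : (n.choose k : ℝ) * k.factorial * (n-k).factorial = n.factorial := by
    exact_mod_cast congrArg (Nat.cast : ℕ → ℝ) (Nat.choose_mul_factorial_mul_factorial hk')
  have hpow : s^k * s^(n-k) = s^n := by rw [← pow_add, Nat.add_sub_cancel' hk']
  have hp : (0:ℝ) < (ascPochhammer ℝ k).eval (1/2) := ascPochhammer_pos k (1/2) (by norm_num)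
  have key : ((ascPochhammer ℝ k).eval (-u) * (-s)^k) * s^(n-k) * (n.factorial:ℝ)
      = ((-1:ℝ)^k * (n.choose k : ℝ) * (ascPochhammer ℝ k).eval (-u)) * s^n
          * ((k.factorial:ℝ) * ((n-k).factorial:ℝ)) := by
    rw [neg_pow]
    linear_combination ((ascPochhammer ℝ k).eval (-u) * (-1:ℝ)^k * (n.factorial:ℝ)) * hpow
      - ((-1:ℝ)^k * (ascPochhammer ℝ k).eval (-u) * s^n) * hch
  rw [div_mul_div_comm, div_mul_div_comm,
    div_eq_div_iff (by positivity) (by positivity)]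
  linear_combination ((ascPochhammer ℝ k).eval (1/2)) * key

private lemma pochratio_rec (u : ℝ) (hu : 0 ≤ u) (n : ℕ) :
    ((ascPochhammer ℝ (n+1)).eval (1/2 + u) / (ascPochhammer ℝ (n+1)).eval (1/2))
      * ((1:ℝ)/2 + n)
    = ((ascPochhammer ℝ n).eval (1/2 + u) / (ascPochhammer ℝ n).eval (1/2))
      * ((1:ℝ)/2 + u + n) := by
  have hp : (0:ℝ) < (ascPochhammer ℝ n).eval (1/2) := ascPochhammer_pos n (1/2) (by norm_num)
  rw [ascPochhammer_succ_eval, ascPochhammer_succ_eval]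
  have h2 : ((1:ℝ)/2 + n) ≠ 0 := by positivity
  field_simp

private lemma quad_nonneg (n : ℕ) : (0:ℝ) ≤ (n:ℝ) * ((n:ℝ) - 1) := by
  rcases n with _ | m
  · norm_num
  · have : (1:ℝ) ≤ ((m+1:ℕ):ℝ) := by exact_mod_cast Nat.one_le_iff_ne_zero.2 (Nat.succ_ne_zero m)
    push_cast
    nlinarith

private lemma P_upper (u : ℝ) (hu0 : 0 ≤ u) (hu1 : u ≤ 1) (n : ℕ) :
    (ascPochhammer ℝ n).eval (1/2 + u) / (ascPochhammer ℝ n).eval (1/2)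
      ≤ 1 + 2*u*n := by
  induction n with
  | zero => simp
  | succ n ih =>
    have h12 : (0:ℝ) < 1/2 + n := by positivity
    have hrec := pochratio_rec u hu0 n
    have hP0 : 0 ≤ (ascPochhammer ℝ n).eval (1/2 + u) / (ascPochhammer ℝ n).eval (1/2) :=
      le_of_lt (div_pos (ascPochhammer_pos n _ (by positivity)) (ascPochhammer_pos n _ (by norm_num)))
    have h2 : ((ascPochhammer ℝ n).eval (1/2 + u) / (ascPochhammer ℝ n).eval (1/2))
        * ((1:ℝ)/2 + u + n) ≤ (1 + 2*u*n) * ((1:ℝ)/2 + u + n) :=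
      mul_le_mul_of_nonneg_right ih (by positivity)
    have h3 : (1 + 2*u*n) * ((1:ℝ)/2 + u + n) ≤ (1 + 2*u*((n:ℝ)+1)) * ((1:ℝ)/2 + n) := by
      nlinarith [mul_nonneg (mul_nonneg hu0 (sub_nonneg.2 hu1)) (Nat.cast_nonneg n : (0:ℝ) ≤ n)]
    have h4 : ((ascPochhammer ℝ (n+1)).eval (1/2 + u) / (ascPochhammer ℝ (n+1)).eval (1/2))
        * ((1:ℝ)/2 + n) ≤ (1 + 2*u*((n:ℝ)+1)) * ((1:ℝ)/2 + n) := by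
      rw [hrec]; linarith
    have := le_of_mul_le_mul_right (by linarith [h4] :
      ((ascPochhammer ℝ (n+1)).eval (1/2 + u) / (ascPochhammer ℝ (n+1)).eval (1/2))
        * ((1:ℝ)/2 + n) ≤ (1 + 2*u*((n:ℝ)+1)) * ((1:ℝ)/2 + n)) h12
    push_cast
    linarith

private lemma P_lower (u : ℝ) (hu0 : 0 ≤ u) (hu1 : u ≤ 1) (n : ℕ) :
    1 + 2*u*n - (2/3)*u*(1-u)*((n:ℝ)*((n:ℝ)-1))
      ≤ (ascPochhammer ℝ n).eval (1/2 + u) / (ascPochhammer ℝ n).eval (1/2) := by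
  induction n with
  | zero => simp
  | succ n ih =>
    have h12 : (0:ℝ) < 1/2 + n := by positivity
    have hrec := pochratio_rec u hu0 n
    have h2 : (1 + 2*u*n - (2/3)*u*(1-u)*((n:ℝ)*((n:ℝ)-1))) * ((1:ℝ)/2 + u + n)
        ≤ ((ascPochhammer ℝ n).eval (1/2 + u) / (ascPochhammer ℝ n).eval (1/2))
          * ((1:ℝ)/2 + u + n) :=
      mul_le_mul_of_nonneg_right ih (by positivity)
    have h3 : (1 + 2*u*((n:ℝ)+1) - (2/3)*u*(1-u)*(((n:ℝ)+1)*(((n:ℝ)+1)-1))) * ((1:ℝ)/2 + n)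
        ≤ (1 + 2*u*n - (2/3)*u*(1-u)*((n:ℝ)*((n:ℝ)-1))) * ((1:ℝ)/2 + u + n) := by
      have hfac : (1 + 2*u*(n:ℝ) - (2/3)*u*(1-u)*((n:ℝ)*((n:ℝ)-1))) * ((1:ℝ)/2 + u + n)
          - (1 + 2*u*((n:ℝ)+1) - (2/3)*u*(1-u)*(((n:ℝ)+1)*(((n:ℝ)+1)-1))) * ((1:ℝ)/2 + n)
          = (2/3)*u*(1-u)*(2-u)*((n:ℝ)*((n:ℝ)-1)) := by ring
      nlinarith [mul_nonneg (mul_nonneg (mul_nonneg (mul_nonneg (by norm_num : (0:ℝ) ≤ 2/3) hu0)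
        (sub_nonneg.2 hu1)) (by linarith : (0:ℝ) ≤ 2 - u)) (quad_nonneg n)]
    have h4 : (1 + 2*u*((n:ℝ)+1) - (2/3)*u*(1-u)*(((n:ℝ)+1)*(((n:ℝ)+1)-1))) * ((1:ℝ)/2 + n)
        ≤ ((ascPochhammer ℝ (n+1)).eval (1/2 + u) / (ascPochhammer ℝ (n+1)).eval (1/2))
          * ((1:ℝ)/2 + n) := by
      rw [hrec]; linarith
    have := le_of_mul_le_mul_right h4 h12
    push_cast
    linarith

private lemma poch_abs_bound (u : ℝ) (hu0 : 0 ≤ u) (hu1 : u ≤ 1) (n : ℕ) :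
    |(ascPochhammer ℝ n).eval (-u)| ≤ 2 * (ascPochhammer ℝ n).eval (1/2) := by
  induction n with
  | zero => simp
  | succ n ih =>
    rw [ascPochhammer_succ_eval, ascPochhammer_succ_eval, abs_mul]
    rcases n with _ | m
    · simp only [ascPochhammer_zero, eval_one, Nat.cast_zero, add_zero, abs_one, one_mul]
      rw [abs_of_nonpos (by linarith)]
      norm_num
      linarith
    · have hn1 : (1:ℝ) ≤ ((m+1:ℕ):ℝ) := by exact_mod_cast Nat.one_le_iff_ne_zero.2 (Nat.succ_ne_zero m)
      have habs : |(-u) + ((m+1:ℕ):ℝ)| ≤ 1/2 + ((m+1:ℕ):ℝ) := by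
        rw [abs_le]; constructor <;> linarith
      have hp : (0:ℝ) < (ascPochhammer ℝ (m+1)).eval (1/2) :=
        ascPochhammer_pos (m+1) (1/2) (by norm_num)
      calc |(ascPochhammer ℝ (m+1)).eval (-u)| * |(-u) + ((m+1:ℕ):ℝ)|
          ≤ (2 * (ascPochhammer ℝ (m+1)).eval (1/2)) * (1/2 + ((m+1:ℕ):ℝ)) := by
            apply mul_le_mul ih habs (abs_nonneg _) (by positivity)
        _ = 2 * ((ascPochhammer ℝ (m+1)).eval (1/2) * (1/2 + ((m+1:ℕ):ℝ))) := by ring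

private lemma main_bounds (u s : ℝ) (hu0 : 0 ≤ u) (hu1 : u ≤ 1) (hs : 0 ≤ s) :
    1 + 2*u*s - (2/3)*u*(1-u)*s^2
      ≤ (∑' n : ℕ, (ascPochhammer ℝ n).eval (-u) * (-s) ^ n
          / ((ascPochhammer ℝ n).eval (1/2) * (n.factorial : ℝ)))
    ∧ (∑' n : ℕ, (ascPochhammer ℝ n).eval (-u) * (-s) ^ n
          / ((ascPochhammer ℝ n).eval (1/2) * (n.factorial : ℝ)))
      ≤ 1 + 2*u*s := by
  set a : ℕ → ℝ := fun n => (ascPochhammer ℝ n).eval (-u) * (-s) ^ n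
      / ((ascPochhammer ℝ n).eval (1/2) * (n.factorial : ℝ)) with ha_def
  set e : ℕ → ℝ := fun n => s ^ n / (n.factorial : ℝ) with he_def
  set P : ℕ → ℝ := fun n =>
      (ascPochhammer ℝ n).eval (1/2 + u) / (ascPochhammer ℝ n).eval (1/2) with hP_def
  have hse : Summable e := Real.summable_pow_div_factorial s
  have he_nonneg : ∀ n, 0 ≤ e n := fun n => by
    have : (0:ℝ) ≤ s ^ n := pow_nonneg hs n
    positivity
  have ha_bound : ∀ n, ‖a n‖ ≤ 2 * e n := by
    intro n
    have hp : (0:ℝ) < (ascPochhammer ℝ n).eval (1/2) := ascPochhammer_pos n (1/2) (by norm_num)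
    have hf : (0:ℝ) < (n.factorial : ℝ) := by positivity
    have h1 : ‖a n‖ = |(ascPochhammer ℝ n).eval (-u)| * s ^ n
        / ((ascPochhammer ℝ n).eval (1/2) * (n.factorial : ℝ)) := by
      rw [ha_def]
      simp only [Real.norm_eq_abs, abs_div, abs_mul]
      rw [abs_of_pos hp, abs_of_pos hf, abs_pow, abs_neg, abs_of_nonneg hs]
    rw [h1]
    calc |(ascPochhammer ℝ n).eval (-u)| * s ^ n
          / ((ascPochhammer ℝ n).eval (1/2) * (n.factorial : ℝ))
        ≤ (2 * (ascPochhammer ℝ n).eval (1/2)) * s ^ n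
          / ((ascPochhammer ℝ n).eval (1/2) * (n.factorial : ℝ)) := by
          have hb := poch_abs_bound u hu0 hu1 n
          have hsn : (0:ℝ) ≤ s ^ n := pow_nonneg hs n
          gcongr
      _ = 2 * e n := by rw [he_def]; field_simp
  have ha_norm : Summable (fun n => ‖a n‖) :=
    Summable.of_nonneg_of_le (fun n => norm_nonneg _) ha_bound (hse.mul_left 2)
  have he_norm : Summable (fun n => ‖e n‖) := by
    have : ∀ n, ‖e n‖ = e n := fun n => by
      rw [Real.norm_eq_abs, abs_of_nonneg (he_nonneg n)]
    exact hse.congr (fun n => (this n).symm)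
  have hterm : ∀ n, ∑ k ∈ range (n+1), a k * e (n-k) = P n * e n := fun n =>
    cauchy_term u s n
  have hmid : Summable (fun n => P n * e n) :=
    ((summable_norm_sum_mul_range_of_summable_norm ha_norm he_norm).of_norm).congr hterm
  have hAE : (∑' n, a n) * (∑' n, e n) = ∑' n, P n * e n := by
    rw [tsum_mul_tsum_eq_tsum_sum_range_of_summable_norm ha_norm he_norm]
    exact tsum_congr hterm
  have hE1 : 1 ≤ ∑' n, e n := by
    have := Summable.le_tsum hse 0 (fun i _ => he_nonneg i)
    have h0 : e 0 = 1 := by rw [he_def]; norm_num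
    linarith [h0 ▸ this]
  have hEpos : (0:ℝ) < ∑' n, e n := by linarith
  -- upper bound
  have hub_fun : (fun n : ℕ => (1 + 2*u*(n:ℝ)) * e n)
      = fun n : ℕ => e n + (2*u) * ((n:ℝ) * e n) := by
    funext n; ring
  have hub_sum : Summable (fun n : ℕ => (1 + 2*u*(n:ℝ)) * e n) := by
    rw [hub_fun]
    exact hse.add ((summable_ne s).mul_left (2*u))
  have hub_tsum : ∑' n : ℕ, (1 + 2*u*(n:ℝ)) * e n = (1 + 2*u*s) * ∑' n, e n := by
    rw [hub_fun, Summable.tsum_add hse ((summable_ne s).mul_left (2*u)), tsum_mul_left, tsum_ne s]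
    ring
  have hupper : (∑' n, a n) ≤ 1 + 2*u*s := by
    have h1 : (∑' n, a n) * (∑' n, e n) ≤ (1 + 2*u*s) * (∑' n, e n) := by
      rw [hAE, ← hub_tsum]
      apply Summable.tsum_le_tsum _ hmid hub_sum
      intro n
      exact mul_le_mul_of_nonneg_right (P_upper u hu0 hu1 n) (he_nonneg n)
    exact le_of_mul_le_mul_right h1 hEpos
  -- lower bound
  have hlb_fun : (fun n : ℕ => (1 + 2*u*(n:ℝ) - (2/3)*u*(1-u)*((n:ℝ)*((n:ℝ)-1))) * e n)
      = fun n : ℕ => (e n + (2*u) * ((n:ℝ) * e n))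
          + (-((2:ℝ)/3*u*(1-u))) * ((n:ℝ) * ((n:ℝ)-1) * e n) := by
    funext n; ring
  have hs1 : Summable (fun n : ℕ => e n + (2*u) * ((n:ℝ) * e n)) :=
    hse.add ((summable_ne s).mul_left (2*u))
  have hs2 : Summable (fun n : ℕ => (-((2:ℝ)/3*u*(1-u))) * ((n:ℝ) * ((n:ℝ)-1) * e n)) :=
    (summable_nne s).mul_left _
  have hlb_sum : Summable (fun n : ℕ =>
      (1 + 2*u*(n:ℝ) - (2/3)*u*(1-u)*((n:ℝ)*((n:ℝ)-1))) * e n) := by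
    rw [hlb_fun]; exact hs1.add hs2
  have hlb_tsum : ∑' n : ℕ, (1 + 2*u*(n:ℝ) - (2/3)*u*(1-u)*((n:ℝ)*((n:ℝ)-1))) * e n
      = (1 + 2*u*s - (2/3)*u*(1-u)*s^2) * ∑' n, e n := by
    rw [hlb_fun, Summable.tsum_add hs1 hs2, Summable.tsum_add hse ((summable_ne s).mul_left (2*u)),
      tsum_mul_left, tsum_mul_left, tsum_ne s, tsum_nne s]
    ring
  have hlower : 1 + 2*u*s - (2/3)*u*(1-u)*s^2 ≤ ∑' n, a n := by
    have h1 : (1 + 2*u*s - (2/3)*u*(1-u)*s^2) * (∑' n, e n)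
        ≤ (∑' n, a n) * (∑' n, e n) := by
      rw [hAE, ← hlb_tsum]
      apply Summable.tsum_le_tsum _ hlb_sum hmid
      intro n
      exact mul_le_mul_of_nonneg_right (P_lower u hu0 hu1 n) (he_nonneg n)
    exact le_of_mul_le_mul_right h1 hEpos
  exact ⟨hlower, hupper⟩

/-- Bounds on the confluent hypergeometric function: for `q ≥ 1` and `t ≥ 0`,
`1 + t/q − (1/(6q))(1 − 1/q)t² ≤ M(−1/q, 1/2, −t/2) ≤ 1 + t/q`, where
`M(c, d, x) = Σ_{n≥0} (c)_n x^n/((d)_n n!)`. -/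
theorem chf_bounds (q t : ℝ) (hq : 1 ≤ q) (ht : 0 ≤ t) :
    1 + t / q - (1 / (6 * q)) * (1 - 1 / q) * t ^ 2
      ≤ (∑' n : ℕ, (ascPochhammer ℝ n).eval (-1 / q) * (-t / 2) ^ n
          / ((ascPochhammer ℝ n).eval (1 / 2) * (n.factorial : ℝ)))
    ∧ (∑' n : ℕ, (ascPochhammer ℝ n).eval (-1 / q) * (-t / 2) ^ n
          / ((ascPochhammer ℝ n).eval (1 / 2) * (n.factorial : ℝ)))
      ≤ 1 + t / q := by
  have hq0 : (0:ℝ) < q := lt_of_lt_of_le one_pos hq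
  have h := main_bounds (1/q) (t/2) (by positivity) ((div_le_one hq0).2 hq) (by linarith)
  have e1 : (-1:ℝ) / q = -(1/q) := by ring
  have e2 : -t / 2 = -(t/2) := by ring
  rw [e1, e2]
  have c1 : 1 + t / q - (1 / (6 * q)) * (1 - 1 / q) * t ^ 2
      = 1 + 2*(1/q)*(t/2) - (2/3)*(1/q)*(1-1/q)*(t/2)^2 := by ring
  have c2 : 1 + t / q = 1 + 2*(1/q)*(t/2) := by ring
  rw [c1, c2]
  exact h
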